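/- Let π be a finitely generated group, V a ℤ[π]-module whose underlying abelian group is free of finite rank, and 0 → V → E → ℤ → 0 a short exact sequence of ℤ[π]-modules with trivial π-action on ℤ, with class c ∈ H¹(π, V) (the image of 1 under the connecting homomorphism). Then c is a torsion element of H¹(π, V) if and only if the induced short exact sequence of ℚ[π]-modules 0 → V⊗ℚ → E⊗ℚ → ℚ → 0 admits a π-equivariant splitting. -/

import Mathlib

open TensorProduct

private lemma intCast_tmul {V : Type*} [AddCommGroup V] [Module ℤ V] (m : ℤ) (u : V) :
    ((m : ℚ)) ⊗ₜ[ℤ] u = (1 : ℚ) ⊗ₜ[ℤ] (m • u) := by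
  induction m using Int.induction_on with
  | zero => simp
  | succ k ih =>
      rw [Int.cast_add, Int.cast_one, add_tmul, ih, ← tmul_add]
      congr 1
      rw [add_zsmul, one_zsmul]
  | pred k ih =>
      rw [Int.cast_sub, Int.cast_one, sub_tmul, ih, ← tmul_sub]
      congr 1
      rw [sub_zsmul, one_zsmul]
      abel

private lemma denom_clear {V : Type*} [AddCommGroup V] [Module ℤ V] (w : ℚ ⊗[ℤ] V) :
    ∃ n : ℕ, 0 < n ∧ ∃ v : V, (n : ℚ) • w = (1 : ℚ) ⊗ₜ[ℤ] v := by
  induction w using TensorProduct.induction_on with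
  | zero => exact ⟨1, one_pos, 0, by simp⟩
  | tmul q u =>
      refine ⟨q.den, q.pos, q.num • u, ?_⟩
      rw [smul_tmul', ← intCast_tmul q.num u]
      congr 1
      rw [smul_eq_mul]
      exact_mod_cast Rat.den_mul_eq_num q
  | add w₁ w₂ ih₁ ih₂ =>
      obtain ⟨n₁, hn₁, v₁, hv₁⟩ := ih₁
      obtain ⟨n₂, hn₂, v₂, hv₂⟩ := ih₂
      refine ⟨n₁ * n₂, Nat.mul_pos hn₁ hn₂, (n₂ : ℤ) • v₁ + (n₁ : ℤ) • v₂, ?_⟩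
      have e₁ : ((n₁ * n₂ : ℕ) : ℚ) • w₁ = (1 : ℚ) ⊗ₜ[ℤ] ((n₂ : ℤ) • v₁) := by
        rw [← intCast_tmul, show (((n₂ : ℤ) : ℚ)) ⊗ₜ[ℤ] v₁ = ((n₂ : ℤ) : ℚ) • ((1:ℚ) ⊗ₜ[ℤ] v₁)
          from by rw [smul_tmul', smul_eq_mul, mul_one], ← hv₁, smul_smul]
        congr 1
        push_cast
        ring
      have e₂ : ((n₁ * n₂ : ℕ) : ℚ) • w₂ = (1 : ℚ) ⊗ₜ[ℤ] ((n₁ : ℤ) • v₂) := by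
        rw [← intCast_tmul, show (((n₁ : ℤ) : ℚ)) ⊗ₜ[ℤ] v₂ = ((n₁ : ℤ) : ℚ) • ((1:ℚ) ⊗ₜ[ℤ] v₂)
          from by rw [smul_tmul', smul_eq_mul, mul_one], ← hv₂, smul_smul]
        congr 1
        push_cast
        ring
      rw [smul_add, e₁, e₂, tmul_add]

private lemma one_tmul_inj {V : Type*} [AddCommGroup V] [Module ℤ V] [Module.Free ℤ V]
    (u : V) (h : (1 : ℚ) ⊗ₜ[ℤ] u = 0) : u = 0 := by
  classical
  let b := Module.Free.chooseBasis ℤ V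
  have key : ∀ j, b.repr u j = 0 := by
    intro j
    have := congrArg (((Algebra.linearMap ℤ ℚ).comp (b.coord j)).liftBaseChange ℚ) h
    simpa using this
  have : b.repr u = 0 := Finsupp.ext key
  simpa using congrArg b.repr.symm this

/-- For a short exact sequence `0 → V → E → ℤ → 0` of `ℤ[π]`-modules (`π` finitely
generated, `V` free of finite rank over `ℤ`, trivial action on `ℤ`), with extension class
`c ∈ H¹(π, V)` represented by the 1-cocycle `g ↦ ρE g e - e` for a lift `e` of `1`:
`c` is torsion in `H¹(π, V)` (i.e. some positive multiple of the cocycle is a coboundary)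
iff the rationalized extension `0 → V⊗ℚ → E⊗ℚ → ℚ → 0` admits a `π`-equivariant splitting. -/
theorem stmt_10 {π V E : Type*} [Group π] [Group.FG π]
    [AddCommGroup V] [Module ℤ V] [Module.Free ℤ V] [Module.Finite ℤ V]
    [AddCommGroup E] [Module ℤ E]
    (ρV : Representation ℤ π V) (ρE : Representation ℤ π E)
    (i : V →ₗ[ℤ] E) (p : E →ₗ[ℤ] ℤ)
    (hi : Function.Injective i) (hp : Function.Surjective p)
    (hexact : LinearMap.range i = LinearMap.ker p)
    (hiequiv : ∀ g : π, (ρE g).comp i = i.comp (ρV g))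
    (hpequiv : ∀ g : π, p.comp (ρE g) = p)  -- trivial π-action on ℤ
    (e : E) (he : p e = 1)
    (c : π → V) (hc : ∀ g : π, i (c g) = ρE g e - e) :
    (∃ n : ℕ, 0 < n ∧ ∃ v : V, ∀ g : π, (n : ℤ) • c g = ρV g v - v) ↔
    (∃ s : ℚ →ₗ[ℚ] ℚ ⊗[ℤ] E,
      (((Algebra.linearMap ℤ ℚ).comp p).liftBaseChange ℚ).comp s = LinearMap.id ∧
      ∀ (g : π) (q : ℚ), LinearMap.baseChange ℚ (ρE g) (s q) = s q) := by
  haveI : Module.Flat ℤ ℚ := IsLocalization.flat ℚ (nonZeroDivisors ℤ)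
  constructor
  · rintro ⟨n, hn, v, hv⟩
    have hne : (n : ℚ) ≠ 0 := by exact_mod_cast hn.ne'
    set x : ℚ ⊗[ℤ] E := (1 : ℚ) ⊗ₜ e - ((n : ℚ)⁻¹) • ((1 : ℚ) ⊗ₜ (i v)) with hxd
    refine ⟨LinearMap.toSpanSingleton ℚ _ x, ?_, ?_⟩
    · apply LinearMap.ext_ring
      have hpiv : p (i v) = 0 := by
        have : i v ∈ LinearMap.ker p := hexact ▸ LinearMap.mem_range_self i v
        exact this
      simp [x, LinearMap.liftBaseChange_tmul, hpiv, he]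
    · intro g q
      have hρe : ρE g e = e + i (c g) := by rw [hc g]; abel
      have hρv : ρE g (i v) = i v + (n : ℤ) • i (c g) := by
        have h1 : ρE g (i v) = i (ρV g v) := by
          have := LinearMap.congr_fun (hiequiv g) v
          simpa using this
        have h2 : ρV g v = v + (n : ℤ) • c g := by rw [hv g]; abel
        rw [h1, h2, map_add, map_zsmul]
      have key : LinearMap.baseChange ℚ (ρE g) x = x := by
        rw [hxd, map_sub, map_smul, LinearMap.baseChange_tmul, LinearMap.baseChange_tmul,
          hρe, hρv, tmul_add, tmul_add, ← intCast_tmul ((n : ℕ) : ℤ) (i (c g)),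
          show ((((n:ℕ) : ℤ)) : ℚ) ⊗ₜ[ℤ] (i (c g)) = ((n:ℕ) : ℚ) • ((1:ℚ) ⊗ₜ[ℤ] i (c g)) from by
            rw [smul_tmul', smul_eq_mul, mul_one]; norm_cast,
          smul_add, smul_smul, inv_mul_cancel₀ hne, one_smul]
        abel
      simp only [LinearMap.toSpanSingleton_apply, map_smul, key]
  · rintro ⟨s, hs1, hs2⟩
    set x : ℚ ⊗[ℤ] E := s 1 with hxdef
    have hLx : (((Algebra.linearMap ℤ ℚ).comp p).liftBaseChange ℚ) x = 1 := by
      have := congrArg (fun f => f (1 : ℚ)) hs1; simpa [hxdef] using this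
    have hgx : ∀ g, LinearMap.baseChange ℚ (ρE g) x = x := fun g => hs2 g 1
    have hcomp : ∀ z : ℚ ⊗[ℤ] E,
        (((Algebra.linearMap ℤ ℚ).comp p).liftBaseChange ℚ) z =
          (TensorProduct.rid ℤ ℚ) (LinearMap.baseChange ℚ p z) := by
      intro z
      induction z using TensorProduct.induction_on with
      | zero => simp
      | tmul a m =>
          simp [LinearMap.liftBaseChange_tmul, TensorProduct.rid_tmul, Algebra.smul_def]
          ring
      | add z₁ z₂ h₁ h₂ => simp [map_add, h₁, h₂]
    set y : ℚ ⊗[ℤ] E := x - (1 : ℚ) ⊗ₜ e with hydef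
    have hpy : LinearMap.baseChange ℚ p y = 0 := by
      have h1 : (((Algebra.linearMap ℤ ℚ).comp p).liftBaseChange ℚ) y = 0 := by
        rw [hydef, map_sub, hLx]
        simp [LinearMap.liftBaseChange_tmul, he]
      rw [hcomp] at h1
      exact (TensorProduct.rid ℤ ℚ).injective (a₁ := LinearMap.baseChange ℚ p y) (a₂ := 0)
        (by simpa using h1)
    have hexact' : Function.Exact i p := LinearMap.exact_iff.mpr hexact.symm
    have hex2 : Function.Exact (LinearMap.lTensor ℚ i) (LinearMap.lTensor ℚ p) :=
      lTensor_exact ℚ hexact' hp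
    have hbci : ⇑(LinearMap.baseChange ℚ i) = ⇑(LinearMap.lTensor ℚ i) :=
      LinearMap.baseChange_eq_ltensor i
    have hbcp : ⇑(LinearMap.baseChange ℚ p) = ⇑(LinearMap.lTensor ℚ p) :=
      LinearMap.baseChange_eq_ltensor p
    obtain ⟨w, hw⟩ : ∃ w, LinearMap.baseChange ℚ i w = y := by
      obtain ⟨w, hw⟩ := (hex2 y).mp (by rw [← hbcp]; exact hpy)
      exact ⟨w, by rw [hbci]; exact hw⟩
    have hinj : Function.Injective (LinearMap.baseChange ℚ i) := by
      rw [hbci]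
      exact Module.Flat.lTensor_preserves_injective_linearMap i hi
    obtain ⟨n, hn, v0, hv0⟩ := denom_clear w
    refine ⟨n, hn, -v0, fun g => ?_⟩
    have hieq2 : ∀ z : ℚ ⊗[ℤ] V,
        LinearMap.baseChange ℚ (ρE g) (LinearMap.baseChange ℚ i z) =
          LinearMap.baseChange ℚ i (LinearMap.baseChange ℚ (ρV g) z) := by
      intro z
      induction z using TensorProduct.induction_on with
      | zero => simp
      | tmul a m =>
          simp only [LinearMap.baseChange_tmul]
          rw [show (ρE g) (i m) = i ((ρV g) m) from by
            simpa using LinearMap.congr_fun (hiequiv g) m]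
      | add z₁ z₂ h₁ h₂ => simp [map_add, h₁, h₂]
    have hρe : ρE g e = e + i (c g) := by rw [hc g]; abel
    have hx2 : x = (1 : ℚ) ⊗ₜ e + LinearMap.baseChange ℚ i w := by
      rw [hw, hydef]; abel
    have main : LinearMap.baseChange ℚ i
        ((1 : ℚ) ⊗ₜ c g + LinearMap.baseChange ℚ (ρV g) w - w) = 0 := by
      have h1 := hgx g
      rw [hx2, map_add, LinearMap.baseChange_tmul, hρe, tmul_add, hieq2] at h1
      have h2 : (1 : ℚ) ⊗ₜ[ℤ] (i (c g)) = LinearMap.baseChange ℚ i ((1 : ℚ) ⊗ₜ c g) := by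
        simp
      rw [h2] at h1
      rw [map_sub, map_add]
      linear_combination (norm := abel) h1
    have main2 : (1 : ℚ) ⊗ₜ c g + LinearMap.baseChange ℚ (ρV g) w - w = 0 := by
      apply hinj; simpa using main
    have m2' : (1 : ℚ) ⊗ₜ[ℤ] c g = w - LinearMap.baseChange ℚ (ρV g) w := by
      linear_combination (norm := abel) main2
    have main3 : (1 : ℚ) ⊗ₜ[ℤ] (((n : ℕ) : ℤ) • c g) =
        (1 : ℚ) ⊗ₜ[ℤ] v0 - (1 : ℚ) ⊗ₜ[ℤ] (ρV g v0) := by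
      have lhs_eq : (1 : ℚ) ⊗ₜ[ℤ] (((n : ℕ) : ℤ) • c g) = (n : ℚ) • ((1 : ℚ) ⊗ₜ[ℤ] c g) := by
        rw [← intCast_tmul ((n : ℕ) : ℤ) (c g), smul_tmul', smul_eq_mul, mul_one]
        norm_cast
      rw [lhs_eq, m2', smul_sub, ← map_smul, hv0, LinearMap.baseChange_tmul]
    have main4 : (1 : ℚ) ⊗ₜ[ℤ] (((n : ℕ) : ℤ) • c g - (v0 - ρV g v0)) = 0 := by
      rw [tmul_sub, main3, tmul_sub, sub_self]
    have h5 := one_tmul_inj _ main4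
    have h6 : ((n : ℕ) : ℤ) • c g = v0 - ρV g v0 := by
      linear_combination (norm := abel) h5
    rw [h6, map_neg]
    abel
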